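/- arXiv:1806.05423 — 3 statements merged into one kernel-verified Lean document; each statement's English description precedes it below -/
import Mathlib

section
/- Let T : [1, ∞) → (0, ∞) be nondecreasing, logarithmically convex, with T(r) → ∞, and suppose limsup_{r→∞} (log T(r))/r = 0. Then for every h > 0 and every ε > 0 there exists a set E ⊆ [1, ∞) of zero upper density such that T(r + h) ≤ (1 + ε) T(r) for all sufficiently large r ∉ E. -/
open Filter MeasureTheory

/-- If `T : [1,∞) → (0,∞)` is nondecreasing, logarithmically convex, `T(r) → ∞`, and
`limsup (log T r)/r = 0`, then for every `h > 0` and `ε > 0` there is a set `E ⊆ [1,∞)`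
of zero upper density with `T(r + h) ≤ (1 + ε) T(r)` for all sufficiently large `r ∉ E`. -/
theorem translate_growth_of_minimal_type (T : ℝ → ℝ)
    (hpos : ∀ r ≥ 1, 0 < T r) (hmono : MonotoneOn T (Set.Ici 1))
    (hconv : ConvexOn ℝ (Set.Ici 0) (fun s => Real.log (T (Real.exp s))))
    (htop : Filter.Tendsto T atTop atTop)
    (hgrowth : Filter.limsup (fun r => ((Real.log (T r) / r : ℝ) : EReal)) atTop = 0) :
    ∀ h > (0 : ℝ), ∀ ε > (0 : ℝ),
      ∃ E : Set ℝ, E ⊆ Set.Ici 1 ∧ MeasurableSet E ∧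
        Filter.limsup (fun r => (((volume (E ∩ Set.Icc 1 r)).toReal / r : ℝ) : EReal))
          atTop = 0 ∧
        ∀ᶠ r in atTop, r ∉ E → T (r + h) ≤ (1 + ε) * T r := by
  intro h hh ε hε
  set c := Real.log (1 + ε) with hc
  have hc0 : 0 < c := Real.log_pos (by linarith)
  set u : ℝ → ℝ := fun t => Real.log (T (max t 1)) with hudef
  have humono : Monotone u := by
    intro a b hab
    have h1 : (1:ℝ) ≤ max a 1 := le_max_right _ _
    have h2 : (1:ℝ) ≤ max b 1 := le_max_right _ _
    exact Real.log_le_log (hpos _ h1) (hmono h1 h2 (max_le_max hab le_rfl))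
  have humeas : Measurable u := humono.measurable
  set E : Set ℝ := Set.Ici 1 ∩ {r | c < u (r + h) - u r} with hE
  have hgnn : ∀ t : ℝ, 0 ≤ u (t + h) - u t := by
    intro t
    have := humono (by linarith : t ≤ t + h)
    linarith
  refine ⟨E, Set.inter_subset_left, ?_, ?_, ?_⟩
  · exact measurableSet_Ici.inter
      (measurableSet_lt measurable_const
        ((humeas.comp (measurable_add_const h)).sub humeas))
  · -- zero upper density
    have huint : ∀ a b : ℝ, IntervalIntegrable u volume a b :=
      fun a b => (humono.monotoneOn _).intervalIntegrable
    have huint' : ∀ a b : ℝ, IntervalIntegrable (fun t => u (t + h)) volume a b := by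
      intro a b
      have hm : Monotone (fun t => u (t + h)) := fun x y hxy => humono (by linarith)
      exact (hm.monotoneOn _).intervalIntegrable
    have hIccInt : ∀ a b : ℝ, IntegrableOn (fun t => u (t + h) - u t) (Set.Icc a b) volume := by
      intro a b
      rcases le_or_gt a b with hab | hab
      · rw [integrableOn_Icc_iff_integrableOn_Ioc]
        exact (((huint' a b).1).sub ((huint a b).1))
      · simp [Set.Icc_eq_empty_of_lt hab]
    have key : ∀ r ≥ (1:ℝ), c * (volume (E ∩ Set.Icc 1 r)).toReal ≤ h * (u (r + h) - u 1) := by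
      intro r hr
      have hEm : MeasurableSet (E ∩ Set.Icc 1 r) :=
        (measurableSet_Ici.inter
          (measurableSet_lt measurable_const
            ((humeas.comp (measurable_add_const h)).sub humeas))).inter measurableSet_Icc
      have hsub : E ∩ Set.Icc 1 r ⊆ Set.Icc 1 r := Set.inter_subset_right
      -- step A : c * vol ≤ ∫ over E∩Icc
      have stepA : c * (volume (E ∩ Set.Icc 1 r)).toReal
          ≤ ∫ t in E ∩ Set.Icc 1 r, (u (t + h) - u t) := by
        have hint : IntegrableOn (fun t => u (t + h) - u t) (E ∩ Set.Icc 1 r) volume :=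
          (hIccInt 1 r).mono_set hsub
        have := setIntegral_mono_on (integrableOn_const (ne_of_lt (by
          have : volume (E ∩ Set.Icc 1 r) ≤ volume (Set.Icc 1 r) := measure_mono hsub
          exact lt_of_le_of_lt this (by simp)))) hint hEm
          (fun x hx => le_of_lt hx.1.2)
        calc c * (volume (E ∩ Set.Icc 1 r)).toReal
            = ∫ _ in E ∩ Set.Icc 1 r, c := by rw [setIntegral_const]; rw [smul_eq_mul]; rw [Measure.real]; ring
          _ ≤ _ := this
      -- step B : enlarge to Icc
      have stepB : ∫ t in E ∩ Set.Icc 1 r, (u (t + h) - u t)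
          ≤ ∫ t in Set.Icc 1 r, (u (t + h) - u t) := by
        refine setIntegral_mono_set (hIccInt 1 r) ?_ (HasSubset.Subset.eventuallyLE hsub)
        exact Filter.Eventually.of_forall fun t => hgnn t
      -- step C,D,E : compute the integral
      have stepC : ∫ t in Set.Icc 1 r, (u (t + h) - u t)
          = (∫ t in (1:ℝ)..r, u (t + h)) - ∫ t in (1:ℝ)..r, u t := by
        rw [MeasureTheory.integral_Icc_eq_integral_Ioc,
          ← intervalIntegral.integral_of_le hr,
          intervalIntegral.integral_sub (huint' 1 r) (huint 1 r)]
      have stepD : (∫ t in (1:ℝ)..r, u (t + h)) = ∫ t in (1+h : ℝ)..(r + h), u t :=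
        intervalIntegral.integral_comp_add_right u h
      have add1 : (∫ t in (1:ℝ)..(1+h), u t) + (∫ t in (1+h:ℝ)..(r+h), u t)
          = ∫ t in (1:ℝ)..(r+h), u t :=
        intervalIntegral.integral_add_adjacent_intervals (huint _ _) (huint _ _)
      have add2 : (∫ t in (1:ℝ)..r, u t) + (∫ t in (r:ℝ)..(r+h), u t)
          = ∫ t in (1:ℝ)..(r+h), u t :=
        intervalIntegral.integral_add_adjacent_intervals (huint _ _) (huint _ _)
      -- step F,G : bound the edge integrals
      have stepF : (∫ t in (r:ℝ)..(r+h), u t) ≤ h * u (r + h) := by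
        have := intervalIntegral.integral_mono_on (by linarith : r ≤ r + h)
          (huint r (r+h)) intervalIntegrable_const
          (fun x hx => humono hx.2 : ∀ x ∈ Set.Icc r (r+h), u x ≤ u (r + h))
        simpa using this
      have stepG : h * u 1 ≤ ∫ t in (1:ℝ)..(1+h), u t := by
        have := intervalIntegral.integral_mono_on (by linarith : (1:ℝ) ≤ 1 + h)
          intervalIntegrable_const (huint 1 (1+h))
          (fun x hx => humono hx.1 : ∀ x ∈ Set.Icc (1:ℝ) (1+h), u 1 ≤ u x)
        simpa using this
      calc c * (volume (E ∩ Set.Icc 1 r)).toReal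
          ≤ ∫ t in Set.Icc 1 r, (u (t + h) - u t) := le_trans stepA stepB
        _ = (∫ t in (r:ℝ)..(r+h), u t) - ∫ t in (1:ℝ)..(1+h), u t := by
            rw [stepC, stepD]; linarith
        _ ≤ h * (u (r + h) - u 1) := by linarith
    -- tendsto of the bound
    have hT1 : ∀ᶠ r in atTop, (1:ℝ) ≤ T r := htop.eventually_ge_atTop 1
    have hg0 : ∀ᶠ r in atTop, 0 ≤ Real.log (T r) / r := by
      filter_upwards [hT1, eventually_gt_atTop (0:ℝ)] with r h1 h2
      exact div_nonneg (Real.log_nonneg h1) h2.le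
    have hgto : Tendsto (fun r => Real.log (T r) / r) atTop (nhds 0) := by
      rw [NormedAddCommGroup.tendsto_nhds_zero]
      intro δ hδ
      have h1 : ∀ᶠ r in atTop, ((Real.log (T r) / r : ℝ) : EReal) < (δ : EReal) := by
        refine eventually_lt_of_limsup_lt ?_ ⟨⊤, Filter.eventually_map.2
          (Filter.Eventually.of_forall fun _ => le_top)⟩
        rw [hgrowth]
        exact_mod_cast hδ
      filter_upwards [h1, hg0] with r h1 h2
      rw [Real.norm_eq_abs, abs_of_nonneg h2]
      exact_mod_cast h1
    have huto : Tendsto (fun r => u (r + h) / r) atTop (nhds 0) := by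
      have A : Tendsto (fun r => Real.log (T (r + h)) / (r + h)) atTop (nhds 0) :=
        hgto.comp (tendsto_atTop_add_const_right _ h tendsto_id)
      have B : Tendsto (fun r : ℝ => (r + h) / r) atTop (nhds 1) := by
        have h1 : Tendsto (fun r : ℝ => 1 + h / r) atTop (nhds (1 + 0)) :=
          tendsto_const_nhds.add (tendsto_const_nhds.div_atTop tendsto_id)
        rw [add_zero] at h1
        refine h1.congr' ?_
        filter_upwards [eventually_ne_atTop (0:ℝ)] with r hr
        field_simp
      have AB := A.mul B
      rw [zero_mul] at AB
      refine AB.congr' ?_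
      filter_upwards [eventually_ge_atTop (1:ℝ)] with r hr
      have hr0 : r ≠ 0 := by linarith
      have hrh : r + h ≠ 0 := by linarith
      have : u (r + h) = Real.log (T (r + h)) := by
        rw [hudef]; simp only []; rw [max_eq_left (by linarith : (1:ℝ) ≤ r + h)]
      rw [this]; field_simp
    have hRto : Tendsto (fun r => h * (u (r + h) - u 1) / (c * r)) atTop (nhds 0) := by
      have A : Tendsto (fun r => (h / c) * (u (r + h) / r) - (h / c) * (u 1 / r))
          atTop (nhds ((h / c) * 0 - (h / c) * 0)) :=
        ((huto.const_mul _).sub ((tendsto_const_nhds.div_atTop tendsto_id).const_mul _))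
      simp only [mul_zero, sub_zero] at A
      refine A.congr' ?_
      filter_upwards [eventually_ne_atTop (0:ℝ)] with r hr
      field_simp
    -- limsup computation
    have hub : ∀ᶠ r in atTop,
        (((volume (E ∩ Set.Icc 1 r)).toReal / r : ℝ) : EReal)
          ≤ ((h * (u (r + h) - u 1) / (c * r) : ℝ) : EReal) := by
      filter_upwards [eventually_ge_atTop (1:ℝ)] with r hr
      have hr0 : (0:ℝ) < r := by linarith
      have hk := key r hr
      have hvnn : (0:ℝ) ≤ (volume (E ∩ Set.Icc 1 r)).toReal := ENNReal.toReal_nonneg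
      have : (volume (E ∩ Set.Icc 1 r)).toReal / r ≤ h * (u (r + h) - u 1) / (c * r) := by
        rw [div_le_div_iff₀ hr0 (by positivity)]
        nlinarith
      exact_mod_cast this
    have hcoeto : Tendsto (fun r => ((h * (u (r + h) - u 1) / (c * r) : ℝ) : EReal))
        atTop (nhds ((0:ℝ) : EReal)) :=
      (continuous_coe_real_ereal.tendsto 0).comp hRto
    have hle : Filter.limsup (fun r => (((volume (E ∩ Set.Icc 1 r)).toReal / r : ℝ) : EReal))
        atTop ≤ 0 := by
      calc Filter.limsup (fun r => (((volume (E ∩ Set.Icc 1 r)).toReal / r : ℝ) : EReal)) atTop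
          ≤ Filter.limsup (fun r => ((h * (u (r + h) - u 1) / (c * r) : ℝ) : EReal)) atTop :=
            limsup_le_limsup hub (by isBoundedDefault) ⟨⊤, Filter.eventually_map.2
              (Filter.Eventually.of_forall fun _ => le_top)⟩
        _ = ((0:ℝ) : EReal) := hcoeto.limsup_eq
        _ = 0 := by norm_cast
    have hge : (0:EReal) ≤ Filter.limsup
        (fun r => (((volume (E ∩ Set.Icc 1 r)).toReal / r : ℝ) : EReal)) atTop := by
      refine le_limsup_of_frequently_le ?_ ⟨⊤, Filter.eventually_map.2
        (Filter.Eventually.of_forall fun _ => le_top)⟩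
      apply Filter.Eventually.frequently
      filter_upwards [eventually_gt_atTop (0:ℝ)] with r hr
      have : (0:ℝ) ≤ (volume (E ∩ Set.Icc 1 r)).toReal / r :=
        div_nonneg ENNReal.toReal_nonneg hr.le
      exact_mod_cast this
    exact le_antisymm hle hge
  · -- the growth estimate off E
    filter_upwards [eventually_ge_atTop (1:ℝ)] with r hr hrE
    have h1 : ¬ (c < u (r + h) - u r) := fun hlt => hrE ⟨hr, hlt⟩
    have e1 : u r = Real.log (T r) := by
      rw [hudef]; simp only []; rw [max_eq_left hr]
    have e2 : u (r + h) = Real.log (T (r + h)) := by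
      rw [hudef]; simp only []; rw [max_eq_left (by linarith : (1:ℝ) ≤ r + h)]
    have h2 : Real.log (T (r + h)) ≤ Real.log (T r) + c := by
      rw [← e1, ← e2]; linarith [not_lt.mp h1]
    have hTr : 0 < T r := hpos r hr
    have hTrh : 0 < T (r + h) := hpos (r + h) (by linarith)
    have h3 : Real.log (T r) + c = Real.log ((1 + ε) * T r) := by
      rw [hc, Real.log_mul (by linarith) (ne_of_gt hTr)]; ring
    rw [h3] at h2
    exact (Real.log_le_log_iff hTrh (by positivity)).mp h2
end

section
/- Let p(r) and h(r) = φ(r)/r be positive nondecreasing functions defined for r ≥ ϱ > 0 and r ≥ τ > 0 respectively, such that ∫_ϱ^∞ dr/p(r) = ∞ and ∫_τ^∞ dr/φ(r) < ∞. Let u(r) be a positive nondecreasing function defined for r ≥ r₀ ≥ ϱ with u(r) → ∞ as r → ∞. Then for every real C > 1, the inequality u(r + p(r)/h(u(r))) < C·u(r) holds for all r ≥ r₀ with u(r) > τ, outside an exceptional set E satisfying ∫_E dr/p(r) ≤ 1/h(w) + (C/(C−1)) ∫_w^∞ dr/φ(r) < ∞, where w = max{τ, u(r₀)}. -/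
open Filter MeasureTheory

/-- Hinkkanen's Borel-type growth lemma. Let `p` and `h = φ/r` be positive nondecreasing
functions on `[ϱ,∞)` and `[τ,∞)` respectively, with `∫_ϱ^∞ dr/p(r) = ∞` and
`∫_τ^∞ dr/φ(r) < ∞`, and let `u` be positive nondecreasing on `[r₀,∞)` with `u(r) → ∞`.
Then for every `C > 1`, `u(r + p(r)/h(u(r))) < C u(r)` holds for all `r ≥ r₀` with
`u(r) > τ` outside a set `E` with
`∫_E dr/p(r) ≤ 1/h(w) + (C/(C-1)) ∫_w^∞ dr/φ(r) < ∞`, where `w = max{τ, u(r₀)}`. -/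
theorem hinkkanen_borel_growth_lemma (p φ h u : ℝ → ℝ) (ϱ τ r₀ : ℝ)
    (hϱ : 0 < ϱ) (hτ : 0 < τ) (hr₀ : ϱ ≤ r₀)
    (hp_pos : ∀ r ≥ ϱ, 0 < p r) (hp_mono : MonotoneOn p (Set.Ici ϱ))
    (hh_def : ∀ r ≥ τ, h r = φ r / r)
    (hh_pos : ∀ r ≥ τ, 0 < h r) (hh_mono : MonotoneOn h (Set.Ici τ))
    (hp_int : (∫⁻ r in Set.Ici ϱ, ENNReal.ofReal (1 / p r)) = ⊤)
    (hφ_int : (∫⁻ r in Set.Ici τ, ENNReal.ofReal (1 / φ r)) < ⊤)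
    (hu_pos : ∀ r ≥ r₀, 0 < u r) (hu_mono : MonotoneOn u (Set.Ici r₀))
    (hu_top : Filter.Tendsto u atTop atTop) :
    ∀ C : ℝ, 1 < C →
      ∃ E : Set ℝ, MeasurableSet E ∧
        (∫⁻ r in E, ENNReal.ofReal (1 / p r))
          ≤ ENNReal.ofReal (1 / h (max τ (u r₀)))
            + ENNReal.ofReal (C / (C - 1))
              * ∫⁻ r in Set.Ici (max τ (u r₀)), ENNReal.ofReal (1 / φ r) ∧
        (∫⁻ r in E, ENNReal.ofReal (1 / p r)) < ⊤ ∧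
        ∀ r, r₀ ≤ r → τ < u r → r ∉ E → u (r + p r / h (u r)) < C * u r := by
  intro C hC
  classical
  have hCpos : (0:ℝ) < C := lt_trans one_pos hC
  have hC1 : (0:ℝ) < C - 1 := sub_pos.mpr hC
  set w : ℝ := max τ (u r₀) with hw
  have hτw : τ ≤ w := le_max_left _ _
  set F : Set ℝ := {r | r₀ ≤ r ∧ τ < u r ∧ C * u r ≤ u (r + p r / h (u r))} with hFdef
  set S : ℝ → Set ℝ := fun c => {r | r ∈ F ∧ c < r} with hSdef
  have hF1 : ∀ r ∈ F, r₀ ≤ r := fun r hr => hr.1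
  have hF2 : ∀ r ∈ F, τ ≤ u r := fun r hr => le_of_lt hr.2.1
  have hFϱ : ∀ r ∈ F, ϱ ≤ r := fun r hr => le_trans hr₀ hr.1
  have hFp : ∀ r ∈ F, p ϱ ≤ p r := fun r hr =>
    hp_mono (Set.mem_Ici.mpr le_rfl) (Set.mem_Ici.mpr (hFϱ r hr)) (hFϱ r hr)
  have hbddS : ∀ c, BddBelow (S c) := fun c => ⟨r₀, fun r hr => hr.1.1⟩
  have hbddu : ∀ c, BddBelow (u '' S c) := fun c => ⟨τ, by rintro y ⟨r, hr, rfl⟩; exact hF2 r hr.1⟩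
  have hbddp : ∀ c, BddBelow (p '' S c) := fun c => ⟨p ϱ, by rintro y ⟨r, hr, rfl⟩; exact hFp r hr.1⟩
  have htle : ∀ c, ∀ r ∈ S c, sInf (S c) ≤ r := fun c r hr => csInf_le (hbddS c) hr
  have htr₀ : ∀ c, (S c).Nonempty → r₀ ≤ sInf (S c) := fun c hne => le_csInf hne fun r hr => hr.1.1
  have hvle : ∀ c, ∀ r ∈ S c, sInf (u '' S c) ≤ u r := fun c r hr => csInf_le (hbddu c) ⟨r, hr, rfl⟩
  have hble : ∀ c, ∀ r ∈ S c, sInf (p '' S c) ≤ p r := fun c r hr => csInf_le (hbddp c) ⟨r, hr, rfl⟩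
  have hvτ : ∀ c, (S c).Nonempty → τ ≤ sInf (u '' S c) := fun c hne =>
    le_csInf (hne.image u) (by rintro y ⟨r, hr, rfl⟩; exact hF2 r hr.1)
  have hvw : ∀ c, (S c).Nonempty → w ≤ sInf (u '' S c) := fun c hne =>
    le_csInf (hne.image u) (by
      rintro y ⟨r, hr, rfl⟩
      exact max_le (hF2 r hr.1)
        (hu_mono (Set.mem_Ici.mpr le_rfl) (Set.mem_Ici.mpr hr.1.1) hr.1.1))
  have hbp : ∀ c, (S c).Nonempty → p ϱ ≤ sInf (p '' S c) := fun c hne =>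
    le_csInf (hne.image p) (by rintro y ⟨r, hr, rfl⟩; exact hFp r hr.1)
  have hbpos : ∀ c, (S c).Nonempty → 0 < sInf (p '' S c) := fun c hne =>
    lt_of_lt_of_le (hp_pos ϱ le_rfl) (hbp c hne)
  have hhv : ∀ c, (S c).Nonempty → 0 < h (sInf (u '' S c)) := fun c hne => hh_pos _ (hvτ c hne)
  set step : ℝ → ℝ := fun c =>
    if (S c).Nonempty then sInf (S c) + sInf (p '' S c) / h (sInf (u '' S c)) else c
    with hstepdef
  have hstep_eq : ∀ c, (S c).Nonempty →
      step c = sInf (S c) + sInf (p '' S c) / h (sInf (u '' S c)) := by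
    intro c hne; simp only [hstepdef, if_pos hne]
  have hstept : ∀ c, (S c).Nonempty → sInf (S c) ≤ step c := by
    intro c hne
    rw [hstep_eq c hne]
    have := le_of_lt (hbpos c hne)
    have := le_of_lt (hhv c hne)
    nlinarith [div_nonneg ‹0 ≤ sInf (p '' S c)› ‹0 ≤ h (sInf (u '' S c))›]
  -- the key growth fact: beyond step c, u is at least C * (inf of u on S c)
  have hkey : ∀ c, (S c).Nonempty → ∀ s, step c < s → C * sInf (u '' S c) ≤ u s := by
    intro c hne s hs
    rw [hstep_eq c hne] at hs
    set δ : ℝ := s - (sInf (S c) + sInf (p '' S c) / h (sInf (u '' S c))) with hδ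
    have hδpos : 0 < δ := sub_pos.mpr hs
    obtain ⟨r₁, hr₁S, hr₁lt⟩ :=
      exists_lt_of_csInf_lt hne (show sInf (S c) < sInf (S c) + δ/2 by linarith)
    have hεpos : 0 < δ/2 * h (sInf (u '' S c)) := mul_pos (by linarith) (hhv c hne)
    obtain ⟨y, hy, hylt⟩ := exists_lt_of_csInf_lt (hne.image p)
      (show sInf (p '' S c) < sInf (p '' S c) + δ/2 * h (sInf (u '' S c)) by linarith)
    obtain ⟨r₂, hr₂S, rfl⟩ := hy
    set r : ℝ := min r₁ r₂ with hrdef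
    have hrS : r ∈ S c := by
      rcases min_cases r₁ r₂ with ⟨hh₁, -⟩ | ⟨hh₁, -⟩ <;> rw [hrdef, hh₁]
      · exact hr₁S
      · exact hr₂S
    have hrF : r ∈ F := hrS.1
    have hrr₀ : r₀ ≤ r := hF1 r hrF
    have hrϱ : ϱ ≤ r := hFϱ r hrF
    have hur : τ ≤ u r := hF2 r hrF
    have hpr : p r ≤ p r₂ := hp_mono (Set.mem_Ici.mpr hrϱ)
      (Set.mem_Ici.mpr (hFϱ r₂ hr₂S.1)) (min_le_right _ _)
    have hhmono : h (sInf (u '' S c)) ≤ h (u r) :=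
      hh_mono (Set.mem_Ici.mpr (hvτ c hne)) (Set.mem_Ici.mpr hur) (hvle c r hrS)
    have hppos : 0 < p r := hp_pos r hrϱ
    have hhvpos : 0 < h (sInf (u '' S c)) := hhv c hne
    have hq : p r / h (u r) ≤
        (sInf (p '' S c) + δ/2 * h (sInf (u '' S c))) / h (sInf (u '' S c)) := by
      have h0 : (0:ℝ) ≤ sInf (p '' S c) + δ/2 * h (sInf (u '' S c)) := by
        have := hbpos c hne; linarith
      exact div_le_div₀ h0 (le_of_lt (lt_of_le_of_lt hpr hylt)) hhvpos hhmono
    have hq2 : (sInf (p '' S c) + δ/2 * h (sInf (u '' S c))) / h (sInf (u '' S c))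
        = sInf (p '' S c) / h (sInf (u '' S c)) + δ/2 := by
      rw [add_div, mul_div_cancel_right₀ _ (ne_of_gt hhvpos)]
    have hrlt : r + p r / h (u r) < s := by
      have h1 : r < sInf (S c) + δ/2 := lt_of_le_of_lt (min_le_left _ _) hr₁lt
      rw [hq2] at hq
      rw [hδ] at *
      linarith
    have huq : 0 < p r / h (u r) := div_pos hppos (lt_of_lt_of_le hhvpos hhmono)
    have hmem1 : r + p r / h (u r) ∈ Set.Ici r₀ := Set.mem_Ici.mpr (by linarith)
    have hmem2 : s ∈ Set.Ici r₀ := Set.mem_Ici.mpr (by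
      have := htr₀ c hne; rw [hδ] at *
      have := div_nonneg (le_of_lt (hbpos c hne)) (le_of_lt hhvpos)
      linarith)
    calc C * sInf (u '' S c) ≤ C * u r := by
          have := hvle c r hrS; nlinarith
      _ ≤ u (r + p r / h (u r)) := hrF.2.2
      _ ≤ u s := hu_mono hmem1 hmem2 (le_of_lt hrlt)
  -- the sequence of cutoffs
  set cs : ℕ → ℝ := fun n => step^[n] (r₀ - 1) with hcsdef
  have hcs0 : cs 0 = r₀ - 1 := rfl
  have hcssucc : ∀ n, cs (n+1) = step (cs n) := fun n => Function.iterate_succ_apply' step n _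
  have hcsmono : ∀ n, cs n ≤ cs (n+1) := by
    intro n
    rw [hcssucc n]
    by_cases hne : (S (cs n)).Nonempty
    · refine le_trans ?_ (hstept _ hne)
      exact le_csInf hne fun r hr => le_of_lt hr.2
    · simp only [hstepdef, if_neg hne]; exact le_rfl
  have hSmono : ∀ n, S (cs (n+1)) ⊆ S (cs n) := by
    intro n r hr
    exact ⟨hr.1, lt_of_le_of_lt (hcsmono n) hr.2⟩
  have hne_pred : ∀ n, (S (cs (n+1))).Nonempty → (S (cs n)).Nonempty := by
    intro n ⟨r, hr⟩; exact ⟨r, hSmono n hr⟩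
  have hne_le : ∀ m n, m ≤ n → (S (cs n)).Nonempty → (S (cs m)).Nonempty := by
    intro m n hmn
    induction n with
    | zero => intro hx; rwa [Nat.le_zero.mp hmn]
    | succ k ih =>
      intro hx
      rcases Nat.le_succ_iff.mp hmn with hmk | heq
      · exact ih hmk (hne_pred k hx)
      · rwa [heq]
  have hvgrow : ∀ n, (S (cs (n+1))).Nonempty →
      C * sInf (u '' S (cs n)) ≤ sInf (u '' S (cs (n+1))) := by
    intro n hne1
    have hne0 : (S (cs n)).Nonempty := hne_pred n hne1
    refine le_csInf (hne1.image u) ?_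
    rintro y ⟨r, hr, rfl⟩
    exact hkey (cs n) hne0 r (by rw [← hcssucc n]; exact hr.2)
  have hvlt : ∀ n, (S (cs (n+1))).Nonempty →
      sInf (u '' S (cs n)) < sInf (u '' S (cs (n+1))) := by
    intro n hne1
    have hne0 := hne_pred n hne1
    have h1 : 0 < sInf (u '' S (cs n)) := lt_of_lt_of_le hτ (hvτ _ hne0)
    have := hvgrow n hne1
    nlinarith
  have hvchain : ∀ m n, m ≤ n → (S (cs n)).Nonempty →
      sInf (u '' S (cs m)) ≤ sInf (u '' S (cs n)) := by
    intro m n hmn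
    induction n with
    | zero => intro hx; rw [Nat.le_zero.mp hmn]
    | succ k ih =>
      intro hx
      rcases Nat.le_succ_iff.mp hmn with hmk | heq
      · exact le_trans (ih hmk (hne_pred k hx)) (le_of_lt (hvlt k hx))
      · rw [heq]
  -- the intervals and the exceptional set
  set Iv : ℕ → Set ℝ := fun n =>
    if (S (cs n)).Nonempty then Set.Icc (sInf (S (cs n))) (cs (n+1)) else ∅ with hIvdef
  have hIvmeas : ∀ n, MeasurableSet (Iv n) := by
    intro n
    by_cases hne : (S (cs n)).Nonempty
    · simp only [hIvdef, if_pos hne]; exact measurableSet_Icc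
    · simp only [hIvdef, if_neg hne]; exact MeasurableSet.empty
  set E : Set ℝ := ⋃ n, Iv n with hEdef
  have hEmeas : MeasurableSet E := MeasurableSet.iUnion hIvmeas
  -- coverage : F ⊆ E
  have hcover : ∀ r ∈ F, r ∈ E := by
    intro r hrF
    by_contra hrE
    have hstage : ∀ n, r ∈ S (cs n) := by
      intro n
      induction n with
      | zero => exact ⟨hrF, by rw [hcs0]; linarith [hF1 r hrF]⟩
      | succ k ih =>
        have hne : (S (cs k)).Nonempty := ⟨r, ih⟩
        have hnotin : r ∉ Iv k := fun hin => hrE (Set.mem_iUnion.mpr ⟨k, hin⟩)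
        rw [hIvdef] at hnotin
        simp only [if_pos hne] at hnotin
        have hge : sInf (S (cs k)) ≤ r := htle _ r ih
        have : ¬ r ≤ cs (k+1) := fun hle => hnotin ⟨hge, hle⟩
        exact ⟨hrF, by linarith⟩
    have hpow : ∀ n, C ^ n * τ ≤ u r := by
      intro n
      have hchain : ∀ m, C ^ m * τ ≤ sInf (u '' S (cs m)) := by
        intro m
        induction m with
        | zero => simpa using hvτ (cs 0) ⟨r, hstage 0⟩
        | succ k ih =>
          have h1 := hvgrow k ⟨r, hstage (k+1)⟩
          calc C ^ (k+1) * τ = C * (C ^ k * τ) := by ring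
            _ ≤ C * sInf (u '' S (cs k)) := by nlinarith
            _ ≤ sInf (u '' S (cs (k+1))) := h1
      exact le_trans (hchain n) (hvle _ r (hstage n))
    obtain ⟨n, hn⟩ := pow_unbounded_of_one_lt (u r / τ) hC
    have := hpow n
    have : u r < C ^ n * τ := (div_lt_iff₀ hτ).mp hn
    linarith
  -- cost of each interval
  have hcost : ∀ n, (S (cs n)).Nonempty →
      (∫⁻ r in Iv n, ENNReal.ofReal (1 / p r))
        ≤ ENNReal.ofReal (1 / h (sInf (u '' S (cs n)))) := by
    intro n hne
    have hIv : Iv n = Set.Icc (sInf (S (cs n))) (cs (n+1)) := by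
      simp only [hIvdef, if_pos hne]
    have hcs1 : cs (n+1) = sInf (S (cs n)) + sInf (p '' S (cs n)) / h (sInf (u '' S (cs n))) := by
      rw [hcssucc, hstep_eq _ hne]
    have hbbpos : 0 < sInf (p '' S (cs n)) := hbpos _ hne
    have hhvpos : 0 < h (sInf (u '' S (cs n))) := hhv _ hne
    have hae : ∀ᵐ r ∂(volume.restrict (Set.Icc (sInf (S (cs n))) (cs (n+1)))),
        ENNReal.ofReal (1 / p r) ≤ ENNReal.ofReal (1 / sInf (p '' S (cs n))) := by
      have h1 : ∀ᵐ (r : ℝ), r ≠ sInf (S (cs n)) := by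
        refine MeasureTheory.ae_iff.mpr ?_
        simp only [ne_eq, not_not, Set.setOf_eq_eq_singleton]
        exact measure_singleton _
      filter_upwards [ae_restrict_mem measurableSet_Icc, ae_restrict_of_ae h1] with r hrmem hrne
      have hlt : sInf (S (cs n)) < r := lt_of_le_of_ne hrmem.1 (Ne.symm hrne)
      obtain ⟨r', hr'S, hr'lt⟩ := exists_lt_of_csInf_lt hne hlt
      have hr'ϱ : ϱ ≤ r' := hFϱ r' hr'S.1
      have hpp : sInf (p '' S (cs n)) ≤ p r :=
        le_trans (hble _ r' hr'S)
          (hp_mono (Set.mem_Ici.mpr hr'ϱ) (Set.mem_Ici.mpr (le_trans hr'ϱ (le_of_lt hr'lt)))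
            (le_of_lt hr'lt))
      exact ENNReal.ofReal_le_ofReal (one_div_le_one_div_of_le hbbpos hpp)
    calc (∫⁻ r in Iv n, ENNReal.ofReal (1 / p r))
        = ∫⁻ r in Set.Icc (sInf (S (cs n))) (cs (n+1)), ENNReal.ofReal (1 / p r) := by rw [hIv]
      _ ≤ ∫⁻ _ in Set.Icc (sInf (S (cs n))) (cs (n+1)),
            ENNReal.ofReal (1 / sInf (p '' S (cs n))) := lintegral_mono_ae hae
      _ = ENNReal.ofReal (1 / sInf (p '' S (cs n)))
            * volume (Set.Icc (sInf (S (cs n))) (cs (n+1))) := setLIntegral_const _ _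
      _ = ENNReal.ofReal (1 / sInf (p '' S (cs n)))
            * ENNReal.ofReal (sInf (p '' S (cs n)) / h (sInf (u '' S (cs n)))) := by
          rw [Real.volume_Icc, hcs1]; ring_nf
      _ = ENNReal.ofReal (1 / h (sInf (u '' S (cs n)))) := by
          rw [← ENNReal.ofReal_mul (by positivity)]
          congr 1
          field_simp
  set A : ℕ → ENNReal := fun n =>
    if (S (cs n)).Nonempty then ENNReal.ofReal (1 / h (sInf (u '' S (cs n)))) else 0 with hAdef
  have hcostA : ∀ n, (∫⁻ r in Iv n, ENNReal.ofReal (1 / p r)) ≤ A n := by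
    intro n
    by_cases hne : (S (cs n)).Nonempty
    · simp only [hAdef, if_pos hne]; exact hcost n hne
    · simp only [hAdef, hIvdef, if_neg hne, Measure.restrict_empty, lintegral_zero_measure, le_refl]
  have hEbound : (∫⁻ r in E, ENNReal.ofReal (1 / p r)) ≤ ∑' n, A n :=
    calc (∫⁻ r in E, ENNReal.ofReal (1 / p r))
        ≤ ∫⁻ r, ENNReal.ofReal (1 / p r) ∂(Measure.sum fun n => volume.restrict (Iv n)) :=
          lintegral_mono' Measure.restrict_iUnion_le le_rfl
      _ = ∑' n, ∫⁻ r in Iv n, ENNReal.ofReal (1 / p r) := lintegral_sum_measure _ _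
      _ ≤ ∑' n, A n := ENNReal.tsum_le_tsum hcostA
  -- bound on A 0
  have hA0 : A 0 ≤ ENNReal.ofReal (1 / h w) := by
    by_cases hne : (S (cs 0)).Nonempty
    · simp only [hAdef, if_pos hne]
      refine ENNReal.ofReal_le_ofReal (one_div_le_one_div_of_le (hh_pos w hτw) ?_)
      exact hh_mono (Set.mem_Ici.mpr hτw) (Set.mem_Ici.mpr (le_trans hτw (hvw _ hne))) (hvw _ hne)
    · simp only [hAdef, if_neg hne]; exact zero_le
  -- facts about φ
  have hφ_eq : ∀ s, τ ≤ s → φ s = h s * s := by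
    intro s hs
    have hs0 : s ≠ 0 := ne_of_gt (lt_of_lt_of_le hτ hs)
    exact ((eq_div_iff hs0).mp (hh_def s hs)).symm
  have hφ_pos : ∀ s, τ ≤ s → 0 < φ s := by
    intro s hs
    rw [hφ_eq s hs]
    exact mul_pos (hh_pos s hs) (lt_of_lt_of_le hτ hs)
  have hφ_mono : ∀ s s', τ ≤ s → s ≤ s' → φ s ≤ φ s' := by
    intro s s' hs hss'
    rw [hφ_eq s hs, hφ_eq s' (le_trans hs hss')]
    have h1 : h s ≤ h s' := hh_mono (Set.mem_Ici.mpr hs) (Set.mem_Ici.mpr (le_trans hs hss')) hss'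
    have h2 : 0 < h s := hh_pos s hs
    nlinarith [lt_of_lt_of_le hτ hs]
  -- the value intervals
  set J : ℕ → Set ℝ := fun n =>
    if (S (cs (n+1))).Nonempty then
      Set.Ico (sInf (u '' S (cs n))) (sInf (u '' S (cs (n+1)))) else ∅ with hJdef
  have hJmeas : ∀ n, MeasurableSet (J n) := by
    intro n
    by_cases hne : (S (cs (n+1))).Nonempty
    · simp only [hJdef, if_pos hne]; exact measurableSet_Ico
    · simp only [hJdef, if_neg hne]; exact MeasurableSet.empty
  have hJd : ∀ m n, m < n → Disjoint (J m) (J n) := by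
    intro m n hmn
    by_cases hm : (S (cs (m+1))).Nonempty
    · by_cases hn' : (S (cs (n+1))).Nonempty
      · simp only [hJdef, if_pos hm, if_pos hn']
        refine Set.disjoint_left.mpr ?_
        rintro x ⟨hx1, hx2⟩ ⟨hy1, hy2⟩
        have hch : sInf (u '' S (cs (m+1))) ≤ sInf (u '' S (cs n)) :=
          hvchain (m+1) n hmn (hne_pred n hn')
        linarith
      · simp only [hJdef, if_neg hn']; exact Set.disjoint_empty _
    · simp only [hJdef, if_neg hm]; exact Set.empty_disjoint _
  have hJdisj : Pairwise (Function.onFun Disjoint J) := by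
    intro m n hmn
    rcases lt_or_gt_of_ne hmn with hlt | hgt
    · exact hJd m n hlt
    · exact (hJd n m hgt).symm
  have hJsub : ∀ n, J n ⊆ Set.Ici w := by
    intro n x hx
    by_cases hne : (S (cs (n+1))).Nonempty
    · simp only [hJdef, if_pos hne] at hx
      exact Set.mem_Ici.mpr (le_trans (hvw _ (hne_pred n hne)) hx.1)
    · simp only [hJdef, if_neg hne] at hx; exact absurd hx (Set.notMem_empty x)
  have hAsucc : ∀ n, A (n+1)
      ≤ ENNReal.ofReal (C / (C-1)) * ∫⁻ s in J n, ENNReal.ofReal (1 / φ s) := by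
    intro n
    by_cases hn1 : (S (cs (n+1))).Nonempty
    · have hn0 : (S (cs n)).Nonempty := hne_pred n hn1
      have hv₁τ : τ ≤ sInf (u '' S (cs n)) := hvτ _ hn0
      have hv₂τ : τ ≤ sInf (u '' S (cs (n+1))) := hvτ _ hn1
      have hgrow := hvgrow n hn1
      have hltv := hvlt n hn1
      have hv₂pos : 0 < sInf (u '' S (cs (n+1))) := lt_of_lt_of_le hτ hv₂τ
      have hφ₂pos : 0 < φ (sInf (u '' S (cs (n+1)))) := hφ_pos _ hv₂τ
      have hh₂pos : 0 < h (sInf (u '' S (cs (n+1)))) := hh_pos _ hv₂τ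
      have hJn : J n = Set.Ico (sInf (u '' S (cs n))) (sInf (u '' S (cs (n+1)))) := by
        simp only [hJdef, if_pos hn1]
      have hlow : ENNReal.ofReal (1 / φ (sInf (u '' S (cs (n+1)))))
            * ENNReal.ofReal (sInf (u '' S (cs (n+1))) - sInf (u '' S (cs n)))
          ≤ ∫⁻ s in J n, ENNReal.ofReal (1 / φ s) := by
        rw [hJn, ← Real.volume_Ico]
        rw [← setLIntegral_const]
        refine lintegral_mono_ae ?_
        filter_upwards [ae_restrict_mem measurableSet_Ico] with s hs
        refine ENNReal.ofReal_le_ofReal (one_div_le_one_div_of_le (hφ_pos s (le_trans hv₁τ hs.1)) ?_)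
        exact hφ_mono s _ (le_trans hv₁τ hs.1) (le_of_lt hs.2)
      have hreal : 1 / h (sInf (u '' S (cs (n+1))))
          ≤ (C / (C-1)) * ((1 / φ (sInf (u '' S (cs (n+1)))))
              * (sInf (u '' S (cs (n+1))) - sInf (u '' S (cs n)))) := by
        have h1 : 1 / h (sInf (u '' S (cs (n+1))))
            = sInf (u '' S (cs (n+1))) / φ (sInf (u '' S (cs (n+1)))) := by
          rw [hh_def _ hv₂τ, one_div_div]
        have key : sInf (u '' S (cs (n+1))) * (C - 1)
            ≤ C * (sInf (u '' S (cs (n+1))) - sInf (u '' S (cs n))) := by nlinarith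
        have hT : (C / (C-1)) * ((1 / φ (sInf (u '' S (cs (n+1)))))
              * (sInf (u '' S (cs (n+1))) - sInf (u '' S (cs n))))
            = (C * (sInf (u '' S (cs (n+1))) - sInf (u '' S (cs n)))) / (C-1)
              / φ (sInf (u '' S (cs (n+1)))) := by
          field_simp
        rw [h1, hT]
        gcongr
        rw [le_div_iff₀ hC1]
        exact key
      calc A (n+1) = ENNReal.ofReal (1 / h (sInf (u '' S (cs (n+1))))) := by
            simp only [hAdef, if_pos hn1]
        _ ≤ ENNReal.ofReal ((C / (C-1)) * ((1 / φ (sInf (u '' S (cs (n+1)))))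
              * (sInf (u '' S (cs (n+1))) - sInf (u '' S (cs n))))) :=
            ENNReal.ofReal_le_ofReal hreal
        _ = ENNReal.ofReal (C / (C-1)) * (ENNReal.ofReal (1 / φ (sInf (u '' S (cs (n+1)))))
              * ENNReal.ofReal (sInf (u '' S (cs (n+1))) - sInf (u '' S (cs n)))) := by
            rw [ENNReal.ofReal_mul (by positivity), ENNReal.ofReal_mul (by positivity)]
        _ ≤ ENNReal.ofReal (C / (C-1)) * ∫⁻ s in J n, ENNReal.ofReal (1 / φ s) :=
            mul_le_mul_right hlow _
    · simp only [hAdef, if_neg hn1]; exact zero_le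
  -- summing up
  have hsum : ∑' n, A n
      ≤ ENNReal.ofReal (1 / h w)
        + ENNReal.ofReal (C / (C-1)) * ∫⁻ s in Set.Ici w, ENNReal.ofReal (1 / φ s) := by
    rw [tsum_eq_zero_add' ENNReal.summable]
    refine add_le_add hA0 ?_
    calc ∑' n, A (n+1)
        ≤ ∑' n, ENNReal.ofReal (C / (C-1)) * ∫⁻ s in J n, ENNReal.ofReal (1 / φ s) :=
          ENNReal.tsum_le_tsum hAsucc
      _ = ENNReal.ofReal (C / (C-1)) * ∑' n, ∫⁻ s in J n, ENNReal.ofReal (1 / φ s) :=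
          ENNReal.tsum_mul_left
      _ ≤ ENNReal.ofReal (C / (C-1)) * ∫⁻ s in Set.Ici w, ENNReal.ofReal (1 / φ s) := by
          refine mul_le_mul_right ?_ _
          have hrest : volume.restrict (⋃ n, J n)
              = Measure.sum fun n => volume.restrict (J n) :=
            Measure.restrict_iUnion hJdisj hJmeas
          calc ∑' n, ∫⁻ s in J n, ENNReal.ofReal (1 / φ s)
              = ∫⁻ s in ⋃ n, J n, ENNReal.ofReal (1 / φ s) := by
                rw [hrest, lintegral_sum_measure]
            _ ≤ ∫⁻ s in Set.Ici w, ENNReal.ofReal (1 / φ s) :=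
                lintegral_mono' (Measure.restrict_mono (Set.iUnion_subset hJsub) le_rfl) le_rfl
  have hfin : ENNReal.ofReal (1 / h w)
      + ENNReal.ofReal (C / (C-1)) * (∫⁻ s in Set.Ici w, ENNReal.ofReal (1 / φ s)) < ⊤ := by
    refine ENNReal.add_lt_top.mpr ⟨ENNReal.ofReal_lt_top, ?_⟩
    refine ENNReal.mul_lt_top ENNReal.ofReal_lt_top ?_
    exact lt_of_le_of_lt
      (lintegral_mono' (Measure.restrict_mono (Set.Ici_subset_Ici.mpr hτw) le_rfl) le_rfl) hφ_int
  refine ⟨E, hEmeas, le_trans hEbound hsum, lt_of_le_of_lt (le_trans hEbound hsum) hfin, ?_⟩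
  intro r hrr₀ hru hrE
  by_contra hcon
  push_neg at hcon
  exact hrE (hcover r ⟨hrr₀, hru, hcon⟩)
end

section
/- Let u : [r₀, ∞) → (0, ∞) be nondecreasing with u(r) → ∞, and suppose limsup_{r→∞} (log u(r))·(log r)^ε / r = 0 for some ε > 0, and limsup_{r→∞} (log log u(r))/(log r) ≤ 1. Then r·log r / (log u(r)·(log log u(r))^{1+ε}) → ∞ as r → ∞. -/
open Filter Topology

/-- If `u : [r₀,∞) → (0,∞)` is nondecreasing with `u(r) → ∞`,
`limsup (log u(r))(log r)^ε / r = 0` for some `ε > 0`, and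
`limsup (log log u(r))/(log r) ≤ 1`, then
`r log r / (log u(r) (log log u(r))^{1+ε}) → ∞` as `r → ∞`. -/
theorem auxiliary_growth_quotient_tendsto_atTop (u : ℝ → ℝ) (r₀ ε : ℝ) (hε : 0 < ε)
    (hu_pos : ∀ r ≥ r₀, 0 < u r) (hu_mono : MonotoneOn u (Set.Ici r₀))
    (hu_top : Filter.Tendsto u atTop atTop)
    (h1 : Filter.limsup
      (fun r => ((Real.log (u r) * Real.log r ^ ε / r : ℝ) : EReal)) atTop = 0)
    (h2 : Filter.limsup
      (fun r => ((Real.log (Real.log (u r)) / Real.log r : ℝ) : EReal)) atTop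
        ≤ (1 : EReal)) :
    Filter.Tendsto
      (fun r => r * Real.log r /
        (Real.log (u r) * Real.log (Real.log (u r)) ^ ((1 : ℝ) + ε)))
      atTop atTop := by
  set f : ℝ → ℝ := fun r => Real.log (u r) * Real.log r ^ ε / r with hf
  -- eventual positivity facts
  have hL : ∀ᶠ r in atTop, Real.exp 1 ≤ Real.log (u r) := by
    filter_upwards [hu_top.eventually (eventually_ge_atTop (Real.exp (Real.exp 1)))] with r hr
    calc Real.exp 1 = Real.log (Real.exp (Real.exp 1)) := (Real.log_exp _).symm
      _ ≤ Real.log (u r) := Real.log_le_log (Real.exp_pos _) hr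
  have hB : ∀ᶠ r : ℝ in atTop, 1 ≤ Real.log r := by
    filter_upwards [eventually_ge_atTop (Real.exp 1)] with r hr
    calc (1:ℝ) = Real.log (Real.exp 1) := (Real.log_exp _).symm
      _ ≤ Real.log r := Real.log_le_log (Real.exp_pos _) hr
  have hr1 : ∀ᶠ r : ℝ in atTop, (1:ℝ) ≤ r := eventually_ge_atTop 1
  have hM : ∀ᶠ r in atTop, 1 ≤ Real.log (Real.log (u r)) := by
    filter_upwards [hL] with r hr
    calc (1:ℝ) = Real.log (Real.exp 1) := (Real.log_exp _).symm
      _ ≤ Real.log (Real.log (u r)) := Real.log_le_log (Real.exp_pos _) hr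
  -- from h2 : eventually log log u r < 2 * log r
  have hMB : ∀ᶠ r in atTop, Real.log (Real.log (u r)) < 2 * Real.log r := by
    have h2' : Filter.limsup
        (fun r => ((Real.log (Real.log (u r)) / Real.log r : ℝ) : EReal)) atTop
          < ((2:ℝ) : EReal) := by
      refine lt_of_le_of_lt h2 ?_
      exact_mod_cast (by norm_num : (1:ℝ) < 2)
    filter_upwards [eventually_lt_of_limsup_lt h2', hB] with r hlt hb
    have hlt' : Real.log (Real.log (u r)) / Real.log r < 2 := by exact_mod_cast hlt
    have hbpos : (0:ℝ) < Real.log r := lt_of_lt_of_le one_pos hb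
    calc Real.log (Real.log (u r))
        = Real.log (Real.log (u r)) / Real.log r * Real.log r := by field_simp
      _ < 2 * Real.log r := by
          exact mul_lt_mul_of_pos_right hlt' hbpos
  -- f is eventually positive
  have hfpos : ∀ᶠ r in atTop, 0 < f r := by
    filter_upwards [hL, hB, hr1] with r hl hb h1r
    have : (0:ℝ) < Real.log (u r) := lt_of_lt_of_le (Real.exp_pos 1) hl
    have hb0 : (0:ℝ) < Real.log r := lt_of_lt_of_le one_pos hb
    have : (0:ℝ) < Real.log r ^ ε := Real.rpow_pos_of_pos hb0 ε
    positivity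
  -- f tends to 0
  have hf0 : Tendsto f atTop (𝓝 (0:ℝ)) := by
    rw [tendsto_order]
    constructor
    · intro a ha
      filter_upwards [hfpos] with r hr
      exact lt_of_lt_of_le ha hr.le
    · intro a ha
      have hcast : Filter.limsup (fun r => ((f r : ℝ) : EReal)) atTop < ((a:ℝ) : EReal) := by
        rw [h1]
        exact_mod_cast ha
      filter_upwards [eventually_lt_of_limsup_lt hcast] with r hr
      exact_mod_cast hr
  have hfinv : Tendsto (fun r => (f r)⁻¹) atTop atTop := by
    refine Tendsto.inv_tendsto_nhdsGT_zero ?_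
    exact tendsto_nhdsWithin_of_tendsto_nhds_of_eventually_within _ hf0 hfpos
  set c : ℝ := ((2:ℝ) ^ ((1:ℝ)+ε))⁻¹ with hc
  have hcpos : 0 < c := by
    have : (0:ℝ) < (2:ℝ) ^ ((1:ℝ)+ε) := Real.rpow_pos_of_pos two_pos _
    positivity
  have hmain : Tendsto (fun r => c * (f r)⁻¹) atTop atTop := hfinv.const_mul_atTop hcpos
  refine tendsto_atTop_mono' atTop ?_ hmain
  filter_upwards [hL, hB, hr1, hM, hMB] with r hl hb h1r hm hmb
  set B := Real.log r
  set L := Real.log (u r)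
  set M := Real.log L
  have hBpos : (0:ℝ) < B := lt_of_lt_of_le one_pos hb
  have hLpos : (0:ℝ) < L := lt_of_lt_of_le (Real.exp_pos 1) hl
  have hMpos : (0:ℝ) < M := lt_of_lt_of_le one_pos hm
  have hrpos : (0:ℝ) < r := lt_of_lt_of_le one_pos h1r
  have hBe : (0:ℝ) < B ^ ε := Real.rpow_pos_of_pos hBpos ε
  have key : c * (f r)⁻¹ = r * B / (L * (2 * B) ^ ((1:ℝ)+ε)) := by
    rw [Real.mul_rpow (by norm_num) hBpos.le, Real.rpow_add hBpos, Real.rpow_one]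
    simp only [hf, hc]
    change (2 ^ (1 + ε))⁻¹ * (L * B ^ ε / r)⁻¹ = _
    field_simp
  rw [key]
  have hrpow : M ^ ((1:ℝ)+ε) ≤ (2*B) ^ ((1:ℝ)+ε) :=
    Real.rpow_le_rpow hMpos.le hmb.le (by linarith)
  have h2B : (0:ℝ) < (2*B) ^ ((1:ℝ)+ε) := Real.rpow_pos_of_pos (by linarith) _
  have hMe : (0:ℝ) < M ^ ((1:ℝ)+ε) := Real.rpow_pos_of_pos hMpos _
  apply div_le_div_of_nonneg_left (by positivity) (by positivity)
  exact mul_le_mul_of_nonneg_left hrpow hLpos.le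
end
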